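/- arXiv:2302.08279 — 2 statements merged into one kernel-verified Lean document; each statement's English description precedes it below -/
import Mathlib

section
/- Let E and F be subsets of [n] of the same cardinality with E ≤ F. Suppose e ∈ E and f ∈ F satisfy e ≤ f, and moreover either e is the largest element of E with e ≤ f, or f is the least element of F with e ≤ f. Then E \ {e} ≤ F \ {f}. -/
/-- Dominance order on equal-cardinality finite sets of naturals:
the i-th smallest element of `E` is at most the i-th smallest element of `F`. -/
def Dom (E F : Finset ℕ) : Prop :=
  List.Forall₂ (· ≤ ·) (Finset.sort E (· ≤ ·)) (Finset.sort F (· ≤ ·))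

/-- The k-th smallest element of `E` (1-based), with junk value 0 out of range. -/
def nth (E : Finset ℕ) (k : ℕ) : ℕ := (Finset.sort E (· ≤ ·)).getD (k - 1) 0

/-- The (0-based) level of `e` in `E`: its index in the increasing enumeration. -/
def level (e : ℕ) (E : Finset ℕ) : ℕ := List.idxOf e (Finset.sort E (· ≤ ·))

lemma sort_erase' (E : Finset ℕ) (e : ℕ) :
    Finset.sort (E.erase e) (· ≤ ·) = (Finset.sort E (· ≤ ·)).erase e := by
  apply List.Perm.eq_of_pairwise' (Finset.pairwise_sort _ _) ?_ ?_
  · exact List.Pairwise.sublist List.erase_sublist (Finset.pairwise_sort _ _)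
  · have : ((Finset.sort (E.erase e) (· ≤ ·) : List ℕ) : Multiset ℕ)
        = ((Finset.sort E (· ≤ ·)).erase e : List ℕ) := by
      rw [← Multiset.coe_erase, Finset.sort_eq, Finset.sort_eq, Finset.erase_val]
    exact Multiset.coe_eq_coe.mp this

theorem stmt3 (n : ℕ) (E F : Finset ℕ) (hEs : E ⊆ Finset.Icc 1 n) (hFs : F ⊆ Finset.Icc 1 n)
    (hc : E.card = F.card) (h : Dom E F) (e f : ℕ) (he : e ∈ E) (hf : f ∈ F) (hef : e ≤ f)
    (hmax : (∀ e' ∈ E, e' ≤ f → e' ≤ e) ∨ (∀ f' ∈ F, e ≤ f' → f ≤ f')) :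
    Dom (E.erase e) (F.erase f) := by
  classical
  set L := Finset.sort E (· ≤ ·) with hL
  set M := Finset.sort F (· ≤ ·) with hM
  have hLlt : L.Pairwise (· < ·) := (Finset.sortedLT_sort E).pairwise
  have hMlt : M.Pairwise (· < ·) := (Finset.sortedLT_sort F).pairwise
  rw [Dom, List.forall₂_iff_get] at h
  obtain ⟨hlen, hget⟩ := h
  have hlen' : L.length = M.length := hlen
  have hget' : ∀ k, (h1 : k < L.length) → (h2 : k < M.length) → L[k] ≤ M[k] :=
    fun k h1 h2 => hget k h1 h2
  have heL : e ∈ L := (Finset.mem_sort _).mpr he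
  have hfM : f ∈ M := (Finset.mem_sort _).mpr hf
  set i := List.idxOf e L with hi
  set j := List.idxOf f M with hj
  have hiL : i < L.length := List.idxOf_lt_length_iff.mpr heL
  have hjM : j < M.length := List.idxOf_lt_length_iff.mpr hfM
  have hLi : L[i] = e := List.getElem_idxOf hiL
  have hMj : M[j] = f := List.getElem_idxOf hjM
  -- getElem strict mono
  have hLmono : ∀ a b : ℕ, (ha : a < L.length) → (hb : b < L.length) → a < b → L[a] < L[b] :=
    fun a b ha hb hab => hLlt.rel_get_of_lt (a := ⟨a, ha⟩) (b := ⟨b, hb⟩) hab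
  have hMmono : ∀ a b : ℕ, (ha : a < M.length) → (hb : b < M.length) → a < b → M[a] < M[b] :=
    fun a b ha hb hab => hMlt.rel_get_of_lt (a := ⟨a, ha⟩) (b := ⟨b, hb⟩) hab
  -- Step 1: j ≤ i
  have hji : j ≤ i := by
    by_contra hcon
    push_neg at hcon  -- i < j
    rcases hmax with hmaxE | hmaxF
    · have hjL : j < L.length := by omega
      have h1 : L[j] ≤ M[j] := hget' j hjL hjM
      have h2 : L[j] ∈ E := (Finset.mem_sort (α := ℕ) (· ≤ ·)).mp (List.getElem_mem _)
      have h3 : L[j] ≤ e := hmaxE _ h2 (by rw [hMj] at h1; exact h1)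
      have := hLmono i j hiL hjL hcon
      omega
    · have hiM : i < M.length := by omega
      have h1 : L[i] ≤ M[i] := hget' i hiL hiM
      have h2 : M[i] ∈ F := (Finset.mem_sort (α := ℕ) (· ≤ ·)).mp (List.getElem_mem _)
      have h3 : f ≤ M[i] := hmaxF _ h2 (by rw [hLi] at h1; exact h1)
      have := hMmono i j hiM hjM hcon
      omega
  -- Step 2
  rw [Dom, sort_erase', sort_erase', ← hL, ← hM, List.erase_eq_eraseIdx_of_idxOf hi.symm,
    List.erase_eq_eraseIdx_of_idxOf hj.symm, List.forall₂_iff_get]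
  have hlenL : (L.eraseIdx i).length = L.length - 1 := by
    rw [List.length_eraseIdx]; simp [hiL]
  have hlenM : (M.eraseIdx j).length = M.length - 1 := by
    rw [List.length_eraseIdx]; simp [hjM]
  constructor
  · omega
  · intro k h₁ h₂
    simp only [List.get_eq_getElem]
    rw [List.getElem_eraseIdx, List.getElem_eraseIdx]
    have hk : k < L.length - 1 := by omega
    by_cases hkj : k < j
    · rw [dif_pos (lt_of_lt_of_le hkj hji), dif_pos hkj]
      exact hget' k (by omega) (by omega)
    · rw [dif_neg hkj]
      by_cases hki : k < i
      · rw [dif_pos hki]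
        have h1 : L[k] ≤ M[k] := hget' k (by omega) (by omega)
        have h2 : M[k] < M[k+1] := hMmono k (k+1) (by omega) (by omega) (by omega)
        omega
      · rw [dif_neg hki]
        exact hget' (k+1) (by omega) (by omega)
end

section
/- Let A and B be subsets of [n] of common cardinality t with A ≤ B, and let γ ∈ [n] \ A. Set A' := A ∪ {γ}. Let q be the maximum index in {1,...,t+1} such that ã'_q > b̃_{q-1} (with b̃_0 = 0), and set α' := ã'_q. Then α' ∉ B, α' ≤ γ, A' ≤ B ∪ {α'}, and α' has the same level in A' and in B ∪ {α'}. -/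
lemma nth_eq_get (E : Finset ℕ) {i : ℕ} (h1 : 1 ≤ i) (h2 : i ≤ E.card) :
    nth E i = (Finset.sort E (· ≤ ·)).get ⟨i - 1, by rw [Finset.length_sort]; omega⟩ :=
  List.getD_eq_get (Finset.sort E (· ≤ ·)) 0 ⟨i - 1, by rw [Finset.length_sort]; omega⟩

lemma nth_mem (E : Finset ℕ) {i : ℕ} (h1 : 1 ≤ i) (h2 : i ≤ E.card) : nth E i ∈ E := by
  rw [nth_eq_get E h1 h2]
  exact (Finset.mem_sort _).1 (List.get_mem _ _)

lemma nth_lt_nth (E : Finset ℕ) {i j : ℕ} (h1 : 1 ≤ i) (hij : i < j) (h2 : j ≤ E.card) :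
    nth E i < nth E j := by
  rw [nth_eq_get E h1 (by omega), nth_eq_get E (by omega) h2]
  exact (E.sortedLT_sort).strictMono_get (by simp [Fin.lt_def]; omega)

lemma nth_le_nth (E : Finset ℕ) {i j : ℕ} (h1 : 1 ≤ i) (hij : i ≤ j) (h2 : j ≤ E.card) :
    nth E i ≤ nth E j := by
  rcases eq_or_lt_of_le hij with rfl | h
  · exact le_rfl
  · exact (nth_lt_nth E h1 h h2).le

lemma exists_nth {E : Finset ℕ} {e : ℕ} (he : e ∈ E) :
    ∃ i, 1 ≤ i ∧ i ≤ E.card ∧ nth E i = e := by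
  obtain ⟨j, hj⟩ := List.mem_iff_get.mp ((Finset.mem_sort (α := ℕ) (· ≤ ·)).2 he)
  have hjl : (j : ℕ) < E.card := by
    have h := j.isLt
    have hlen : (Finset.sort E (· ≤ ·)).length = E.card := Finset.length_sort _
    omega
  refine ⟨j + 1, by omega, by omega, ?_⟩
  rw [nth_eq_get E (by omega) (by omega)]
  simpa using hj

lemma nth_le_iff (E : Finset ℕ) {i x : ℕ} (h1 : 1 ≤ i) (h2 : i ≤ E.card) :
    nth E i ≤ x ↔ i ≤ (E.filter (· ≤ x)).card := by
  constructor
  · intro h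
    have hsub : (Finset.range i).image (fun j => nth E (j + 1)) ⊆ E.filter (· ≤ x) := by
      intro e hee
      simp only [Finset.mem_image, Finset.mem_range] at hee
      obtain ⟨j, hj, rfl⟩ := hee
      refine Finset.mem_filter.2 ⟨nth_mem E (by omega) (by omega), ?_⟩
      exact le_trans (nth_le_nth E (by omega) (by omega) h2) h
    have hinj : Set.InjOn (fun j => nth E (j + 1)) (Finset.range i) := by
      intro a ha b hb hab
      simp only [Finset.coe_range, Set.mem_Iio] at ha hb
      by_contra hne
      rcases Nat.lt_or_ge a b with hl | hl
      · exact absurd hab (nth_lt_nth E (by omega) (by omega) (by omega)).ne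
      · have : b < a := by omega
        exact absurd hab.symm (nth_lt_nth E (by omega) (by omega) (by omega)).ne
    calc i = ((Finset.range i).image (fun j => nth E (j + 1))).card := by
              rw [Finset.card_image_of_injOn hinj, Finset.card_range]
      _ ≤ (E.filter (· ≤ x)).card := Finset.card_le_card hsub
  · intro h
    by_contra hc
    push_neg at hc
    have hsub : E.filter (· ≤ x) ⊆ (Finset.range (i - 1)).image (fun j => nth E (j + 1)) := by
      intro e hee
      obtain ⟨heE, hex⟩ := Finset.mem_filter.1 hee
      obtain ⟨k, hk1, hk2, hke⟩ := exists_nth heE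
      have hki : k < i := by
        by_contra hik
        push_neg at hik
        have := nth_le_nth E h1 hik hk2
        omega
      simp only [Finset.mem_image, Finset.mem_range]
      exact ⟨k - 1, by omega, by rw [show k - 1 + 1 = k by omega]; exact hke⟩
    have := Finset.card_le_card hsub
    have h3 := Finset.card_image_le (s := Finset.range (i - 1)) (f := fun j => nth E (j + 1))
    rw [Finset.card_range] at h3
    omega

lemma level_nth (E : Finset ℕ) {i : ℕ} (h1 : 1 ≤ i) (h2 : i ≤ E.card) :
    level (nth E i) E = i - 1 := by
  rw [nth_eq_get E h1 h2]
  exact List.get_idxOf (E.sort_nodup _) _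

theorem stmt9 (n t : ℕ) (A B : Finset ℕ) (hAs : A ⊆ Finset.Icc 1 n) (hBs : B ⊆ Finset.Icc 1 n)
    (hAc : A.card = t) (hBc : B.card = t) (hdom : Dom A B)
    (γ : ℕ) (hγ : γ ∈ Finset.Icc 1 n) (hγA : γ ∉ A)
    (q : ℕ) (hq1 : 1 ≤ q) (hq2 : q ≤ t + 1)
    -- q satisfies the defining property (with the convention b̃_0 = 0, the case q = 1
    -- holds vacuously):
    (hqP : q = 1 ∨ nth (insert γ A) q > nth B (q - 1))
    -- q is the largest with this property:
    (hqmax : ∀ r, q < r → r ≤ t + 1 → nth (insert γ A) r ≤ nth B (r - 1)) :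
    nth (insert γ A) q ∉ B ∧
    nth (insert γ A) q ≤ γ ∧
    Dom (insert γ A) (insert (nth (insert γ A) q) B) ∧
    level (nth (insert γ A) q) (insert γ A) =
      level (nth (insert γ A) q) (insert (nth (insert γ A) q) B) := by
  set A' : Finset ℕ := insert γ A with hA'
  set α : ℕ := nth A' q with hα
  have hA'c : A'.card = t + 1 := by rw [hA', Finset.card_insert_of_notMem hγA, hAc]
  -- pointwise dominance from Dom
  have hAB : ∀ i, 1 ≤ i → i ≤ t → nth A i ≤ nth B i := by
    intro i hi1 hi2
    have hlA : (Finset.sort A (· ≤ ·)).length = t := by rw [Finset.length_sort, hAc]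
    have hlB : (Finset.sort B (· ≤ ·)).length = t := by rw [Finset.length_sort, hBc]
    have := (List.forall₂_iff_get.mp hdom).2 (i - 1) (by rw [hlA]; omega) (by rw [hlB]; omega)
    rwa [← nth_eq_get A hi1 (by omega), ← nth_eq_get B hi1 (by omega)] at this
  -- nth of the superset A' is at most nth of A
  have ha'a : ∀ i, 1 ≤ i → i ≤ t → nth A' i ≤ nth A i := by
    intro i hi1 hi2
    rw [nth_le_iff A' hi1 (by omega)]
    have h1 : i ≤ (A.filter (· ≤ nth A i)).card :=
      (nth_le_iff A hi1 (by omega)).mp le_rfl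
    have h2 : A.filter (· ≤ nth A i) ⊆ A'.filter (· ≤ nth A i) :=
      Finset.filter_subset_filter _ (Finset.subset_insert _ _)
    have := Finset.card_le_card h2
    omega
  -- α ≤ γ
  have hαγ : α ≤ γ := by
    by_cases hq1' : q = 1
    · subst hq1'
      obtain ⟨k, hk1, hk2, hke⟩ := exists_nth (Finset.mem_insert_self γ A)
      rw [hα, ← hke]
      exact nth_le_nth A' le_rfl hk1 hk2
    · have hP : nth B (q - 1) < α := by
        rcases hqP with h | h
        · omega
        · exact h
      by_contra hγα
      push_neg at hγα
      have hx : α ≤ max γ (nth A (q - 1)) := by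
        rw [hα, nth_le_iff A' hq1 (by omega)]
        have hγf : γ ∉ A.filter (· ≤ nth A (q - 1)) := fun h => hγA (Finset.mem_filter.1 h).1
        have hsub : insert γ (A.filter (· ≤ nth A (q - 1))) ⊆ A'.filter (· ≤ max γ (nth A (q - 1))) := by
          intro e hee
          rcases Finset.mem_insert.1 hee with rfl | hee
          · exact Finset.mem_filter.2 ⟨Finset.mem_insert_self _ _, le_max_left _ _⟩
          · obtain ⟨heA, hex⟩ := Finset.mem_filter.1 hee
            exact Finset.mem_filter.2 ⟨Finset.mem_insert_of_mem heA, le_trans hex (le_max_right _ _)⟩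
        have h1 : q - 1 ≤ (A.filter (· ≤ nth A (q - 1))).card :=
          (nth_le_iff A (by omega) (by omega)).mp le_rfl
        have h2 := Finset.card_le_card hsub
        rw [Finset.card_insert_of_notMem hγf] at h2
        omega
      have hmax : max γ (nth A (q - 1)) = nth A (q - 1) := by omega
      rw [hmax] at hx
      have := hAB (q - 1) (by omega) (by omega)
      omega
  -- if q ≤ t then α < nth B q
  have hq_lt : q ≤ t → α < nth B q := by
    intro hqt
    have h1 : nth A' q < nth A' (q + 1) := nth_lt_nth A' hq1 (by omega) (by omega)
    have h2 := hqmax (q + 1) (by omega) (by omega)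
    simp only [Nat.add_sub_cancel] at h2
    omega
  -- α ∉ B
  have hαB : α ∉ B := by
    intro hmem
    rcases Nat.eq_zero_or_pos t with ht | ht
    · have : B = ∅ := Finset.card_eq_zero.1 (by omega)
      simp [this] at hmem
    obtain ⟨j, hj1, hj2, hje⟩ := exists_nth hmem
    rw [hBc] at hj2
    by_cases hqt : q ≤ t
    · have hlt := hq_lt hqt
      have hjq : j < q := by
        by_contra h
        push_neg at h
        have := nth_le_nth B hq1 h (by omega)
        omega
      have hq2' : 2 ≤ q := by omega
      have hP : nth B (q - 1) < α := by
        rcases hqP with h | h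
        · omega
        · exact h
      have := nth_le_nth B hj1 (show j ≤ q - 1 by omega) (by omega)
      omega
    · have hq' : q = t + 1 := by omega
      have hP : nth B (q - 1) < α := by
        rcases hqP with h | h
        · omega
        · exact h
      have := nth_le_nth B hj1 (show j ≤ q - 1 by omega) (by omega)
      omega
  set B' : Finset ℕ := insert α B with hB'
  have hB'c : B'.card = t + 1 := by rw [hB', Finset.card_insert_of_notMem hαB, hBc]
  -- α ≤ nth B' q
  have hαb'q : α ≤ nth B' q := by
    by_contra h
    push_neg at h
    obtain ⟨x, hx⟩ : ∃ x, x = nth B' q := ⟨_, rfl⟩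
    have hc : q ≤ (B'.filter (· ≤ x)).card := by
      rw [hx]; exact (nth_le_iff B' hq1 (by omega)).mp le_rfl
    have hfe : B'.filter (· ≤ x) = B.filter (· ≤ x) := by
      rw [hB', Finset.filter_insert, if_neg (by omega)]
    rw [hfe] at hc
    by_cases hqt : q ≤ t
    · have h1 : nth B q ≤ x := (nth_le_iff B hq1 (by omega)).mpr hc
      have := hq_lt hqt
      omega
    · have hle := Finset.card_le_card (Finset.filter_subset (· ≤ x) B)
      omega
  -- nth B' q ≤ α
  have hb'qα : nth B' q ≤ α := by
    rw [nth_le_iff B' hq1 (by omega)]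
    by_cases hq1' : q = 1
    · subst hq1'
      have : α ∈ B'.filter (· ≤ α) :=
        Finset.mem_filter.2 ⟨Finset.mem_insert_self _ _, le_rfl⟩
      have := Finset.card_pos.2 ⟨α, this⟩
      omega
    · have hP : nth B (q - 1) < α := by
        rcases hqP with h | h
        · omega
        · exact h
      have hαf : α ∉ B.filter (· ≤ nth B (q - 1)) := fun h => hαB (Finset.mem_filter.1 h).1
      have hsub : insert α (B.filter (· ≤ nth B (q - 1))) ⊆ B'.filter (· ≤ α) := by
        intro e hee
        rcases Finset.mem_insert.1 hee with rfl | hee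
        · exact Finset.mem_filter.2 ⟨Finset.mem_insert_self _ _, le_rfl⟩
        · obtain ⟨heB, hex⟩ := Finset.mem_filter.1 hee
          exact Finset.mem_filter.2 ⟨Finset.mem_insert_of_mem heB, by omega⟩
      have h1 : q - 1 ≤ (B.filter (· ≤ nth B (q - 1))).card :=
        (nth_le_iff B (by omega) (by omega)).mp le_rfl
      have h2 := Finset.card_le_card hsub
      rw [Finset.card_insert_of_notMem hαf] at h2
      omega
  have hbq : nth B' q = α := le_antisymm hb'qα hαb'q
  -- pointwise dominance for A', B'
  have hdom' : ∀ j, 1 ≤ j → j ≤ t + 1 → nth A' j ≤ nth B' j := by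
    intro j hj1 hj2
    rcases lt_trichotomy j q with hjq | rfl | hjq
    · by_cases hc : α ≤ nth B' j
      · exact le_trans (nth_le_nth A' hj1 hjq.le (by omega)) hc
      · push_neg at hc
        have h1 : nth A' j ≤ nth A j := ha'a j hj1 (by omega)
        have h2 : nth A j ≤ nth B j := hAB j hj1 (by omega)
        have h3 : nth B j ≤ nth B' j := by
          obtain ⟨x, hx⟩ : ∃ x, x = nth B' j := ⟨_, rfl⟩
          have hcq : j ≤ (B'.filter (· ≤ x)).card := by
            rw [hx]; exact (nth_le_iff B' hj1 (by omega)).mp le_rfl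
          have hfe : B'.filter (· ≤ x) = B.filter (· ≤ x) := by
            rw [hB', Finset.filter_insert, if_neg (by omega)]
          rw [hfe] at hcq
          have := (nth_le_iff B hj1 (by omega)).mpr hcq
          omega
        omega
    · rw [hbq]
    · have h1 : nth A' j ≤ nth B (j - 1) := hqmax j hjq hj2
      have h2 : nth B (j - 1) ≤ nth B' j := by
        obtain ⟨x, hx⟩ : ∃ x, x = nth B' j := ⟨_, rfl⟩
        have hcq : j ≤ (B'.filter (· ≤ x)).card := by
          rw [hx]; exact (nth_le_iff B' hj1 (by omega)).mp le_rfl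
        have hcard : (B'.filter (· ≤ x)).card ≤ (B.filter (· ≤ x)).card + 1 := by
          rw [hB', Finset.filter_insert]
          split
          · exact Finset.card_insert_le _ _
          · omega
        have := (nth_le_iff B (by omega) (show j - 1 ≤ B.card by omega)).mpr
          (show j - 1 ≤ (B.filter (· ≤ x)).card by omega)
        omega
      omega
  have hDom : Dom A' B' := by
    rw [Dom, List.forall₂_iff_get]
    have hlA : (Finset.sort A' (· ≤ ·)).length = t + 1 := by rw [Finset.length_sort, hA'c]
    have hlB : (Finset.sort B' (· ≤ ·)).length = t + 1 := by rw [Finset.length_sort, hB'c]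
    refine ⟨by omega, ?_⟩
    intro i hi1 hi2
    have h := hdom' (i + 1) (by omega) (by omega)
    have e1 : (Finset.sort A' (· ≤ ·)).get ⟨i, hi1⟩ = nth A' (i + 1) :=
      (nth_eq_get A' (i := i + 1) (by omega) (by omega)).symm
    have e2 : (Finset.sort B' (· ≤ ·)).get ⟨i, hi2⟩ = nth B' (i + 1) :=
      (nth_eq_get B' (i := i + 1) (by omega) (by omega)).symm
    rw [e1, e2]
    exact h
  have hlevA : level α A' = q - 1 := level_nth A' hq1 (by omega)
  have hlevB : level α B' = q - 1 := by rw [← hbq]; exact level_nth B' hq1 (by omega)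
  exact ⟨hαB, hαγ, hDom, by rw [hlevA, hlevB]⟩
end
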